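/- Let m, n be reals with 0 < m < n ≤ 3m and n² ≠ 3m², and let Γ = {(2mi + mj, nj) : i, j ∈ ℤ}. Let A = {(x,y) : m ≤ x + y ≤ n, 2m − n ≤ x − y ≤ m}, B = {(x,y) : m ≤ x + y ≤ n, −m ≤ x − y ≤ 2m − n}, and let τ(x,y) = (2m − x, y), ρ(x,y) = (m − x, n − y), σ(x,y) = (y, x). Suppose K ⊆ A and L ⊆ B are compact sets with K ∪ τ(K) = A and K ∩ τ(K) of Lebesgue measure zero, L ∪ ρ(L) = B and L ∩ ρ(L) of Lebesgue measure zero, and σ(K ∪ L) = K ∪ L. Let S = {(x,y) : |x| + |y| ≤ m} and F = S ∪ ⋃_{γ ∈ {id,−id,α,−α}} γ(K ∪ L). Then F is a fundamental domain for Γ, and Sym(F) contains the group of order 8 generated by α and σ (a dihedral group of order 8). -/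

import Mathlib

open MeasureTheory

/-- The rhombic lattice `Γ = {(2mi + mj, nj) : i, j ∈ ℤ}` as a subset of `ℝ²`. -/
def rhombicLattice (m n : ℝ) : Set (ℝ × ℝ) :=
  {p | ∃ i j : ℤ, p = (2 * m * (i : ℝ) + m * (j : ℝ), n * (j : ℝ))}

/-- The point group `{id, −id, α, −α}` of a rhombic lattice, where `α(x,y) = (−x,y)`. -/
def fourMaps : Set (ℝ × ℝ → ℝ × ℝ) :=
  {fun p => p, fun p => (-p.1, p.2), fun p => (p.1, -p.2), fun p => (-p.1, -p.2)}

/-- The dihedral group of order 8 generated by the reflections `α(x,y) = (−x,y)` and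
`σ(x,y) = (y,x)`: the eight symmetries of the square. -/
def octicMaps : Set (ℝ × ℝ → ℝ × ℝ) :=
  {fun p => p, fun p => (-p.1, p.2), fun p => (p.1, -p.2), fun p => (-p.1, -p.2),
   fun p => (p.2, p.1), fun p => (-p.2, p.1), fun p => (p.2, -p.1), fun p => (-p.2, -p.1)}

section AuxStmt5

open Pointwise Classical ENNReal

/-- The lattice as an additive subgroup. -/
def Lam (m n : ℝ) : AddSubgroup (ℝ × ℝ) where
  carrier := rhombicLattice m n
  zero_mem' := ⟨0, 0, by simp [Prod.ext_iff]⟩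
  add_mem' := by
    rintro a b ⟨i, j, rfl⟩ ⟨i', j', rfl⟩
    exact ⟨i + i', j + j', by
      push_cast [Prod.ext_iff, Prod.fst_add, Prod.snd_add]; constructor <;> ring⟩
  neg_mem' := by
    rintro a ⟨i, j, rfl⟩
    exact ⟨-i, -j, by
      push_cast [Prod.ext_iff, Prod.fst_neg, Prod.snd_neg]; constructor <;> ring⟩

instance LamCountable (m n : ℝ) : Countable (Lam m n) := by
  have h : rhombicLattice m n = Set.range (fun ij : ℤ × ℤ =>
      ((2 * m * (ij.1 : ℝ) + m * (ij.2 : ℝ), n * (ij.2 : ℝ)) : ℝ × ℝ)) := by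
    ext p
    constructor
    · rintro ⟨i, j, rfl⟩; exact ⟨(i, j), rfl⟩
    · rintro ⟨⟨i, j⟩, rfl⟩; exact ⟨i, j, rfl⟩
  have : Set.Countable (rhombicLattice m n) := by rw [h]; exact Set.countable_range _
  exact this.to_subtype

/-- Half-open fundamental parallelogram of the lattice. -/
def Dom (m n : ℝ) : Set (ℝ × ℝ) :=
  {p | 0 ≤ p.2 ∧ p.2 < n ∧ 0 ≤ p.1 - (m / n) * p.2 ∧ p.1 - (m / n) * p.2 < 2 * m}

lemma measurable_Dom (m n : ℝ) : MeasurableSet (Dom m n) := by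
  unfold Dom
  exact (measurableSet_le measurable_const measurable_snd).inter
    ((measurableSet_lt measurable_snd measurable_const).inter
      ((measurableSet_le measurable_const
        (measurable_fst.sub (measurable_snd.const_mul _))).inter
        (measurableSet_lt (measurable_fst.sub (measurable_snd.const_mul _)) measurable_const)))

lemma uniqueK (a r : ℝ) (ha : 0 < a) : ∃! k : ℤ, 0 ≤ a * k + r ∧ a * k + r < a := by
  refine ⟨-⌊r / a⌋, ⟨?_, ?_⟩, ?_⟩
  · have h := (le_div_iff₀ ha).mp (Int.floor_le (r / a))
    push_cast; linarith
  · have h := (div_lt_iff₀ ha).mp (Int.lt_floor_add_one (r / a))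
    push_cast; push_cast at h; linarith
  · intro k ⟨h1, h2⟩
    have hfl : ⌊r / a⌋ = -k := by
      apply Int.floor_eq_iff.mpr
      constructor
      · rw [le_div_iff₀ ha]; push_cast; nlinarith
      · rw [div_lt_iff₀ ha]; push_cast; nlinarith
    omega

lemma exists_unique_vadd_mem (m n : ℝ) (hm : 0 < m) (hn : 0 < n) (x : ℝ × ℝ) :
    ∃! g : (Lam m n), g +ᵥ x ∈ Dom m n := by
  have hn' : n ≠ 0 := ne_of_gt hn
  obtain ⟨j, ⟨hj1, hj2⟩, hju⟩ := uniqueK n x.2 hn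
  obtain ⟨i, ⟨hi1, hi2⟩, hiu⟩ := uniqueK (2 * m) (x.1 - (m / n) * x.2) (by linarith)
  have key : ∀ i' j' : ℤ, ((2 * m * (i' : ℝ) + m * (j' : ℝ), n * (j' : ℝ)) + x) ∈ Dom m n ↔
      ((0 ≤ n * j' + x.2 ∧ n * j' + x.2 < n) ∧
       (0 ≤ 2 * m * i' + (x.1 - (m / n) * x.2) ∧
         2 * m * i' + (x.1 - (m / n) * x.2) < 2 * m)) := by
    intro i' j'
    simp only [Dom, Set.mem_setOf_eq, Prod.fst_add, Prod.snd_add]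
    have harr : (2 * m * (i' : ℝ) + m * (j' : ℝ) + x.1) - (m / n) * (n * (j' : ℝ) + x.2)
        = 2 * m * i' + (x.1 - (m / n) * x.2) := by
      field_simp; ring
    rw [harr]
    tauto
  refine ⟨⟨(2 * m * (i : ℝ) + m * (j : ℝ), n * (j : ℝ)), ⟨i, j, rfl⟩⟩, ?_, ?_⟩
  · exact (key i j).mpr ⟨⟨hj1, hj2⟩, ⟨hi1, hi2⟩⟩
  · rintro ⟨g, i', j', rfl⟩ hg
    have h := (key i' j').mp hg
    have hj' : j' = j := hju j' ⟨h.1.1, h.1.2⟩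
    have hi' : i' = i := hiu i' ⟨h.2.1, h.2.2⟩
    subst hj' hi'
    rfl

lemma isAddFD (m n : ℝ) (hm : 0 < m) (hn : 0 < n) :
    IsAddFundamentalDomain (Lam m n) (Dom m n) volume :=
  IsAddFundamentalDomain.mk' (measurable_Dom m n).nullMeasurableSet
    (exists_unique_vadd_mem m n hm hn)

lemma vol_Dom (m n : ℝ) (hm : 0 < m) (hn : 0 < n) :
    volume (Dom m n) = ENNReal.ofReal (2 * m * n) := by
  have hDm := measurable_Dom m n
  rw [show (volume : Measure (ℝ × ℝ)) = (volume : Measure ℝ).prod volume from rfl]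
  rw [Measure.prod_apply_symm hDm]
  have hslice1 : ∀ y ∈ Set.Ico (0:ℝ) n, (fun x => (x, y)) ⁻¹' Dom m n
      = Set.Ico ((m/n)*y) ((m/n)*y + 2*m) := by
    intro y hy
    ext x
    simp only [Dom, Set.mem_preimage, Set.mem_setOf_eq, Set.mem_Ico]
    obtain ⟨h1, h2⟩ := hy
    constructor
    · rintro ⟨-, -, h3, h4⟩; constructor <;> linarith
    · rintro ⟨h3, h4⟩; exact ⟨h1, h2, by linarith, by linarith⟩
  have hslice2 : ∀ y : ℝ, y ∉ Set.Ico (0:ℝ) n → (fun x => (x, y)) ⁻¹' Dom m n = ∅ := by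
    intro y hy
    ext x
    simp only [Dom, Set.mem_preimage, Set.mem_setOf_eq, Set.mem_empty_iff_false, iff_false]
    rw [Set.mem_Ico] at hy
    rintro ⟨h1, h2, -⟩
    exact hy ⟨h1, h2⟩
  calc ∫⁻ y, volume ((fun x => (x, y)) ⁻¹' Dom m n)
      = ∫⁻ y, (Set.Ico (0:ℝ) n).indicator (fun _ => ENNReal.ofReal (2*m)) y := by
        apply lintegral_congr
        intro y
        by_cases hy : y ∈ Set.Ico 0 n
        · rw [hslice1 y hy, Set.indicator_of_mem hy, Real.volume_Ico]
          norm_num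
        · rw [hslice2 y hy, Set.indicator_of_notMem hy]
          exact measure_empty
    _ = ENNReal.ofReal (2 * m * n) := by
        rw [lintegral_indicator measurableSet_Ico, setLIntegral_const, Real.volume_Ico]
        rw [← ENNReal.ofReal_mul (by linarith)]
        norm_num

/-- The rotation-by-45°-and-scale linear map used to compute volumes. -/
noncomputable def Tmap : ℝ × ℝ →ₗ[ℝ] ℝ × ℝ where
  toFun := fun p => (p.1 + p.2, p.1 - p.2)
  map_add' := by intro a b; simp [Prod.ext_iff]; constructor <;> ring
  map_smul' := by intro c a; simp [Prod.ext_iff, smul_eq_mul]; constructor <;> ring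

lemma det_Tmap : LinearMap.det Tmap = -2 := by
  let b : Module.Basis (Fin 2) ℝ (ℝ × ℝ) := Module.Basis.finTwoProd ℝ
  rw [← LinearMap.det_toMatrix b]
  have h : LinearMap.toMatrix b b Tmap = !![1, 1; 1, -1] := by
    ext i j
    rw [LinearMap.toMatrix_apply]
    fin_cases i <;> fin_cases j <;>
      simp [Tmap, b, Module.Basis.finTwoProd, Matrix.cons_val_zero, Matrix.cons_val_one]
  rw [h, Matrix.det_fin_two_of]
  norm_num

lemma vol_T_preimage (s : Set (ℝ × ℝ)) :
    volume (Tmap ⁻¹' s) = ENNReal.ofReal (2⁻¹) * volume s := by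
  rw [Measure.addHaar_preimage_linearMap volume (by rw [det_Tmap]; norm_num)]
  rw [det_Tmap]
  norm_num [abs_of_nonneg]

lemma vol_box (a b c d : ℝ) :
    volume (Set.Icc a b ×ˢ Set.Icc c d) = ENNReal.ofReal (b - a) * ENNReal.ofReal (d - c) := by
  rw [show (volume : Measure (ℝ × ℝ)) = (volume : Measure ℝ).prod volume from rfl]
  rw [Measure.prod_prod, Real.volume_Icc, Real.volume_Icc]

lemma mp_negfst : MeasurePreserving (fun p : ℝ × ℝ => (-p.1, p.2)) volume volume := by
  have h : (fun p : ℝ × ℝ => (-p.1, p.2)) = Prod.map (fun x : ℝ => -x) (id : ℝ → ℝ) := rfl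
  rw [h, show (volume : Measure (ℝ × ℝ)) = (volume : Measure ℝ).prod volume from rfl]
  exact (Measure.measurePreserving_neg _).prod (MeasurePreserving.id _)

lemma mp_sub (c : ℝ) : MeasurePreserving (fun x : ℝ => c - x) volume volume := by
  have h : (fun x : ℝ => c - x) = (fun x : ℝ => c + x) ∘ (fun x : ℝ => -x) := by
    funext x; simp [sub_eq_add_neg]
  rw [h]
  exact (measurePreserving_add_left volume c).comp (Measure.measurePreserving_neg _)

lemma mp_tau (c : ℝ) : MeasurePreserving (fun p : ℝ × ℝ => (c - p.1, p.2)) volume volume := by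
  have h : (fun p : ℝ × ℝ => (c - p.1, p.2))
      = Prod.map (fun x : ℝ => c - x) (id : ℝ → ℝ) := rfl
  rw [h, show (volume : Measure (ℝ × ℝ)) = (volume : Measure ℝ).prod volume from rfl]
  exact (mp_sub c).prod (MeasurePreserving.id _)

lemma mp_rho (c d : ℝ) :
    MeasurePreserving (fun p : ℝ × ℝ => (c - p.1, d - p.2)) volume volume := by
  have h : (fun p : ℝ × ℝ => (c - p.1, d - p.2))
      = Prod.map (fun x : ℝ => c - x) (fun x : ℝ => d - x) := rfl
  rw [h, show (volume : Measure (ℝ × ℝ)) = (volume : Measure ℝ).prod volume from rfl]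
  exact (mp_sub c).prod (mp_sub d)

lemma vol_image_inv {f : ℝ × ℝ → ℝ × ℝ} (hf : MeasurePreserving f volume volume)
    (hinv : Function.Involutive f) (s : Set (ℝ × ℝ)) (hs : NullMeasurableSet s volume) :
    volume (f '' s) = volume s := by
  rw [Set.image_eq_preimage_of_inverse hinv.leftInverse hinv.rightInverse]
  exact hf.measure_preimage hs

def inPlus (m n X Y : ℝ) : Prop :=
  (|X + Y| ≤ n ∧ |X - Y| ≤ m) ∨ (|X + Y| ≤ m ∧ |X - Y| ≤ n)

lemma minmax {m n X Y : ℝ} (hmn : m ≤ n) (h1 : |X| + |Y| ≤ n) (h2 : |X| - |Y| ≤ m)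
    (h3 : |Y| - |X| ≤ m) : inPlus m n X Y := by
  unfold inPlus
  rcases le_total 0 X with hX | hX <;> rcases le_total 0 Y with hY | hY
  · rw [abs_of_nonneg hX, abs_of_nonneg hY] at h1 h2 h3
    left; rw [abs_le, abs_le]; constructor <;> constructor <;> linarith
  · rw [abs_of_nonneg hX, abs_of_nonpos hY] at h1 h2 h3
    right; rw [abs_le, abs_le]; constructor <;> constructor <;> linarith
  · rw [abs_of_nonpos hX, abs_of_nonneg hY] at h1 h2 h3
    right; rw [abs_le, abs_le]; constructor <;> constructor <;> linarith
  · rw [abs_of_nonpos hX, abs_of_nonpos hY] at h1 h2 h3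
    left; rw [abs_le, abs_le]; constructor <;> constructor <;> linarith

lemma half_shift {m x : ℝ} (hm : 0 < m) : ∃ k : ℤ, |x - m * k| ≤ m / 2 := by
  refine ⟨⌊x / m + 1 / 2⌋, ?_⟩
  have h1 := Int.floor_le (x / m + 1 / 2)
  have h2 := Int.lt_floor_add_one (x / m + 1 / 2)
  have key : m * (x / m + 1 / 2) = x + m / 2 := by field_simp
  have h1' := mul_le_mul_of_nonneg_left h1 hm.le
  have h2' := mul_lt_mul_of_pos_left h2 hm
  rw [key] at h1' h2'
  rw [abs_le]
  constructor <;> nlinarith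

lemma evpm : ∀ b c : ℤ, (b = 1 ∨ b = -1) → (c = 1 ∨ c = -1) → Even (b - c) := by
  rintro b c (rfl | rfl) (rfl | rfl) <;> decide

lemma odpm : ∀ a b : ℤ, Odd a → (b = 1 ∨ b = -1) → Even (a + b) := by
  rintro a b ⟨c, rfl⟩ (rfl | rfl)
  · exact ⟨c + 1, by ring⟩
  · exact ⟨c, by ring⟩

lemma cover_plus {m n : ℝ} (hm : 0 < m) (hmn : m < n) (hn3 : n ≤ 3 * m) (x y : ℝ) :
    ∃ k j : ℤ, Even (k - j) ∧ inPlus m n (x - m * k) (y - n * j) := by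
  have hn : (0:ℝ) < n := lt_trans hm hmn
  obtain ⟨k0, hk0⟩ := half_shift (x := x) hm
  obtain ⟨j0, hj0⟩ := half_shift (x := y) hn
  set x' := x - m * k0 with hx'
  set y' := y - n * j0 with hy'
  set s : ℤ := if 0 ≤ x' then 1 else -1 with hs
  set t : ℤ := if 0 ≤ y' then 1 else -1 with ht
  have hs1 : s = 1 ∨ s = -1 := by unfold s; split <;> simp
  have ht1 : t = 1 ∨ t = -1 := by unfold t; split <;> simp
  have hxs : |x' - m * s| = m - |x'| := by
    unfold s
    split
    · next h =>
      push_cast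
      rw [abs_of_nonpos (by rw [abs_le] at hk0; linarith), abs_of_nonneg h]; ring
    · next h =>
      push_cast
      rw [abs_of_nonneg (by rw [abs_le] at hk0; push_neg at h; linarith),
        abs_of_nonpos (le_of_not_ge h)]; ring
  have hys : |y' - n * t| = n - |y'| := by
    unfold t
    split
    · next h =>
      push_cast
      rw [abs_of_nonpos (by rw [abs_le] at hj0; linarith), abs_of_nonneg h]; ring
    · next h =>
      push_cast
      rw [abs_of_nonneg (by rw [abs_le] at hj0; push_neg at h; linarith),
        abs_of_nonpos (le_of_not_ge h)]; ring
  have hax : |x'| ≤ m / 2 := hk0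
  have hay : |y'| ≤ n / 2 := hj0
  have h0x : (0:ℝ) ≤ |x'| := abs_nonneg _
  have h0y : (0:ℝ) ≤ |y'| := abs_nonneg _
  rcases Int.even_or_odd (k0 - j0) with E | O
  · by_cases hc : |y'| - |x'| ≤ m
    · refine ⟨k0, j0, E, ?_⟩
      rw [← hx', ← hy']
      exact minmax hmn.le (by linarith) (by linarith) hc
    · push_neg at hc
      refine ⟨k0 + s, j0 + t, ?_, ?_⟩
      · have h : k0 + s - (j0 + t) = (k0 - j0) + (s - t) := by ring
        rw [h]; exact E.add (evpm s t hs1 ht1)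
      · have hX : x - m * ((k0 + s : ℤ) : ℝ) = x' - m * s := by push_cast [hx']; ring
        have hY : y - n * ((j0 + t : ℤ) : ℝ) = y' - n * t := by push_cast [hy']; ring
        rw [hX, hY]
        exact minmax hmn.le (by rw [hxs, hys]; linarith) (by rw [hxs, hys]; linarith)
          (by rw [hxs, hys]; linarith)
  · by_cases hc : |x'| ≤ |y'| ∧ n - m ≤ |x'| + |y'|
    · refine ⟨k0, j0 + t, ?_, ?_⟩
      · have h : k0 - (j0 + t) = (k0 - j0) + (-t) := by ring
        rw [h]
        exact odpm _ _ O (by rcases ht1 with h | h <;> simp [h])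
      · have hY : y - n * ((j0 + t : ℤ) : ℝ) = y' - n * t := by push_cast [hy']; ring
        rw [hY, ← hx']
        exact minmax hmn.le (by rw [hys]; linarith [hc.1]) (by rw [hys]; linarith)
          (by rw [hys]; linarith [hc.2])
    · refine ⟨k0 + s, j0, ?_, ?_⟩
      · have h : k0 + s - j0 = (k0 - j0) + s := by ring
        rw [h]; exact odpm _ _ O hs1
      · have hX : x - m * ((k0 + s : ℤ) : ℝ) = x' - m * s := by push_cast [hx']; ring
        rw [hX, ← hy']
        have h1 : m - |x'| + |y'| ≤ n := by
          rcases le_or_gt (|x'|) (|y'|) with h | h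
          · have h' := (not_and.mp hc) h
            push_neg at h'
            linarith
          · linarith
        exact minmax hmn.le (by rw [hxs]; linarith) (by rw [hxs]; linarith)
          (by rw [hxs]; linarith)

lemma aux_pairwise_null {α : Type*} [MeasurableSpace α] (μ : Measure α) {ι : Type*} [Countable ι]
    (A : ι → Set α) (hmeas : ∀ i, MeasurableSet (A i))
    (heq : ∑' i, μ (A i) ≤ μ (⋃ i, A i)) (hfin : μ (⋃ i, A i) ≠ ⊤) :
    ∀ i j, i ≠ j → μ (A i ∩ A j) = 0 := by
  intro i j hij
  set U := ⋃ k, A k with hU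
  set f : ι → ℝ≥0∞ := fun k => if k = i ∨ k = j then 0 else μ (A k) with hf
  have hsplit : ∑' k, μ (A k) = μ (A i) + (μ (A j) + ∑' k, f k) := by
    rw [ENNReal.tsum_eq_add_tsum_ite i]
    congr 1
    rw [ENNReal.tsum_eq_add_tsum_ite j]
    rw [if_neg (by exact fun h => hij h.symm)]
    congr 1
    apply tsum_congr
    intro k
    by_cases h1 : k = j <;> by_cases h2 : k = i <;> simp [hf, h1, h2]
  have hcover : U ⊆ (A i ∪ A j) ∪ ⋃ k, (if k = i ∨ k = j then (∅ : Set α) else A k) := by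
    intro x hx
    obtain ⟨k, hk⟩ := Set.mem_iUnion.mp hx
    by_cases h : k = i ∨ k = j
    · rcases h with rfl | rfl
      · exact Or.inl (Or.inl hk)
      · exact Or.inl (Or.inr hk)
    · exact Or.inr (Set.mem_iUnion.mpr ⟨k, by rw [if_neg h]; exact hk⟩)
  have hbound : μ U + μ (A i ∩ A j) ≤ μ (A i) + μ (A j) + ∑' k, f k := by
    calc μ U + μ (A i ∩ A j)
        ≤ (μ (A i ∪ A j) + ∑' k, f k) + μ (A i ∩ A j) := by
          gcongr
          refine le_trans (measure_mono hcover) (le_trans (measure_union_le _ _) ?_)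
          gcongr
          refine le_trans (measure_iUnion_le _) ?_
          apply ENNReal.tsum_le_tsum
          intro k
          by_cases h : k = i ∨ k = j <;> simp [hf, h]
      _ = (μ (A i ∪ A j) + μ (A i ∩ A j)) + ∑' k, f k := by ring
      _ = (μ (A i) + μ (A j)) + ∑' k, f k := by rw [measure_union_add_inter _ (hmeas j)]
      _ = _ := by ring
  have hle : μ U + μ (A i ∩ A j) ≤ μ U + 0 := by
    rw [add_zero]
    refine le_trans hbound (le_trans ?_ heq)
    rw [hsplit]; ring_nf; exact le_refl _
  have := (ENNReal.add_le_add_iff_left hfin).mp hle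
  exact le_antisymm this zero_le

lemma image_add_eq_vadd (v : ℝ × ℝ) (F : Set (ℝ × ℝ)) :
    (fun p => p + v) '' F = v +ᵥ F := by
  ext p
  constructor
  · rintro ⟨a, ha, rfl⟩
    exact ⟨a, ha, add_comm v a⟩
  · rintro ⟨a, ha, rfl⟩
    exact ⟨a, ha, add_comm a v⟩

lemma img_self {α : Type*} {f g : α → α} {X : Set α} (hfg : ∀ p, f (g p) = p)
    (hfX : ∀ p ∈ X, f p ∈ X) (hgX : ∀ p ∈ X, g p ∈ X) : f '' X = X := by
  apply Set.Subset.antisymm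
  · rintro p ⟨a, ha, rfl⟩
    exact hfX a ha
  · intro p hp
    exact ⟨g p, hgX p hp, hfg p⟩

lemma abs_sum_le_iff (a b c : ℝ) :
    |a| + |b| ≤ c ↔ (-c ≤ a + b ∧ a + b ≤ c ∧ -c ≤ a - b ∧ a - b ≤ c) := by
  rcases le_total 0 a with hA | hA <;> rcases le_total 0 b with hB | hB
  · rw [abs_of_nonneg hA, abs_of_nonneg hB]
    constructor
    · intro h; refine ⟨by linarith, by linarith, by linarith, by linarith⟩
    · rintro ⟨h1, h2, h3, h4⟩; linarith
  · rw [abs_of_nonneg hA, abs_of_nonpos hB]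
    constructor
    · intro h; refine ⟨by linarith, by linarith, by linarith, by linarith⟩
    · rintro ⟨h1, h2, h3, h4⟩; linarith
  · rw [abs_of_nonpos hA, abs_of_nonneg hB]
    constructor
    · intro h; refine ⟨by linarith, by linarith, by linarith, by linarith⟩
    · rintro ⟨h1, h2, h3, h4⟩; linarith
  · rw [abs_of_nonpos hA, abs_of_nonpos hB]
    constructor
    · intro h; refine ⟨by linarith, by linarith, by linarith, by linarith⟩
    · rintro ⟨h1, h2, h3, h4⟩; linarith

end AuxStmt5

open Pointwise in
set_option maxHeartbeats 2000000 in
theorem stmt_5 (m n : ℝ) (hm : 0 < m) (hmn : m < n) (hn3 : n ≤ 3 * m)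
    (hsq : n ^ 2 ≠ 3 * m ^ 2)
    (A B S K L F : Set (ℝ × ℝ)) (τ ρ σ : ℝ × ℝ → ℝ × ℝ)
    (hA : A = {p : ℝ × ℝ | m ≤ p.1 + p.2 ∧ p.1 + p.2 ≤ n ∧
                2 * m - n ≤ p.1 - p.2 ∧ p.1 - p.2 ≤ m})
    (hB : B = {p : ℝ × ℝ | m ≤ p.1 + p.2 ∧ p.1 + p.2 ≤ n ∧
                -m ≤ p.1 - p.2 ∧ p.1 - p.2 ≤ 2 * m - n})
    (hτ : τ = fun p => (2 * m - p.1, p.2))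
    (hρ : ρ = fun p => (m - p.1, n - p.2))
    (hσ : σ = fun p => (p.2, p.1))
    (hKc : IsCompact K) (hLc : IsCompact L) (hKA : K ⊆ A) (hLB : L ⊆ B)
    (hK1 : K ∪ τ '' K = A) (hK0 : volume (K ∩ τ '' K) = 0)
    (hL1 : L ∪ ρ '' L = B) (hL0 : volume (L ∩ ρ '' L) = 0)
    (hσKL : σ '' (K ∪ L) = K ∪ L)
    (hS : S = {p : ℝ × ℝ | |p.1| + |p.2| ≤ m})
    (hF : F = S ∪ ⋃ γ ∈ fourMaps, γ '' (K ∪ L)) :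
    IsCompact F ∧
    (⋃ v ∈ rhombicLattice m n, (fun p => p + v) '' F) = Set.univ ∧
    (∀ v ∈ rhombicLattice m n, v ≠ 0 →
      interior F ∩ interior ((fun p => p + v) '' F) = ∅) ∧
    ∀ f ∈ octicMaps, f '' F = F := by
  subst hτ hρ hσ
  have hn : (0:ℝ) < n := lt_trans hm hmn
  set W := K ∪ L with hWdef
  have hWc : IsCompact W := hKc.union hLc
  have hWm : MeasurableSet W := hWc.isClosed.measurableSet
  -- names for the maps
  set al : ℝ × ℝ → ℝ × ℝ := fun p => (-p.1, p.2) with hal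
  set be : ℝ × ℝ → ℝ × ℝ := fun p => (p.1, -p.2) with hbe
  set nu : ℝ × ℝ → ℝ × ℝ := fun p => (-p.1, -p.2) with hnu
  set sw : ℝ × ℝ → ℝ × ℝ := fun p => (p.2, p.1) with hsw
  have hUeq : (⋃ γ ∈ fourMaps, γ '' W) = W ∪ (al '' W ∪ (be '' W ∪ nu '' W)) := by
    simp only [fourMaps]
    rw [Set.biUnion_insert, Set.biUnion_insert, Set.biUnion_insert, Set.biUnion_singleton,
      Set.image_id']
  have hFeq : F = S ∪ (W ∪ (al '' W ∪ (be '' W ∪ nu '' W))) := by rw [hF, hUeq]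
  -- composition identities (all definitional)
  have IC : ∀ (f g h : ℝ × ℝ → ℝ × ℝ), (∀ p, f (g p) = h p) → ∀ X : Set (ℝ × ℝ),
      f '' (g '' X) = h '' X := by
    intro f g h hrel X
    rw [← Set.image_comp]
    have : f ∘ g = h := funext hrel
    rw [this]
  have hal2 : ∀ p, al (al p) = p := fun p => by simp [hal]
  have hbe2 : ∀ p, be (be p) = p := fun p => by simp [hbe]
  have hnu2 : ∀ p, nu (nu p) = p := fun p => by simp [hnu]
  have hsw2 : ∀ p, sw (sw p) = p := fun p => by simp [hsw]
  -- symmetry of S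
  have hSal : al '' S = S := by
    apply img_self hal2 <;> (intro p hp; rw [hS] at hp ⊢; simpa [hal, abs_neg] using hp)
  have hSbe : be '' S = S := by
    apply img_self hbe2 <;> (intro p hp; rw [hS] at hp ⊢; simpa [hbe, abs_neg] using hp)
  have hSsw : sw '' S = S := by
    apply img_self hsw2 <;>
      (intro p hp; rw [hS] at hp ⊢; simp only [hsw, Set.mem_setOf_eq] at hp ⊢; linarith)
  -- symmetry of U := W ∪ (al''W ∪ (be''W ∪ nu''W))
  have hUal : al '' (W ∪ (al '' W ∪ (be '' W ∪ nu '' W)))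
      = W ∪ (al '' W ∪ (be '' W ∪ nu '' W)) := by
    simp only [Set.image_union]
    rw [IC al al (fun p => p) hal2 W, Set.image_id',
      IC al be nu (fun p => rfl) W, IC al nu be (fun p => by simp [hal, hnu, hbe]) W]
    ext p
    simp only [Set.mem_union]
    tauto
  have hUbe : be '' (W ∪ (al '' W ∪ (be '' W ∪ nu '' W)))
      = W ∪ (al '' W ∪ (be '' W ∪ nu '' W)) := by
    simp only [Set.image_union]
    rw [IC be be (fun p => p) hbe2 W, Set.image_id',
      IC be al nu (fun p => rfl) W, IC be nu al (fun p => by simp [hbe, hnu, hal]) W]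
    ext p
    simp only [Set.mem_union]
    tauto
  have hUsw : sw '' (W ∪ (al '' W ∪ (be '' W ∪ nu '' W)))
      = W ∪ (al '' W ∪ (be '' W ∪ nu '' W)) := by
    simp only [Set.image_union]
    rw [hσKL]
    rw [IC sw al (fun p => be (sw p)) (fun p => rfl) W,
      ← IC be sw (fun p => be (sw p)) (fun p => rfl) W, hσKL,
      IC sw be (fun p => al (sw p)) (fun p => rfl) W,
      ← IC al sw (fun p => al (sw p)) (fun p => rfl) W, hσKL,
      IC sw nu (fun p => nu (sw p)) (fun p => rfl) W,
      ← IC nu sw (fun p => nu (sw p)) (fun p => rfl) W, hσKL]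
    ext p
    simp only [Set.mem_union]
    tauto
  have hFal : al '' F = F := by
    rw [hFeq, Set.image_union, hSal, hUal]
  have hFbe : be '' F = F := by
    rw [hFeq, Set.image_union, hSbe, hUbe]
  have hFsw : sw '' F = F := by
    rw [hFeq, Set.image_union, hSsw, hUsw]
  have hFnu : nu '' F = F := by
    rw [show nu '' F = al '' (be '' F) from (IC al be nu (fun p => rfl) F).symm, hFbe, hFal]
  -- the octic symmetry conclusion
  have hoctic : ∀ f ∈ octicMaps, f '' F = F := by
    intro f hf
    simp only [octicMaps, Set.mem_insert_iff, Set.mem_singleton_iff] at hf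
    rcases hf with rfl | rfl | rfl | rfl | rfl | rfl | rfl | rfl
    · exact Set.image_id' F
    · exact hFal
    · exact hFbe
    · exact hFnu
    · exact hFsw
    · rw [show (fun p : ℝ × ℝ => (-p.2, p.1)) '' F = al '' (sw '' F) from
        (IC al sw _ (fun p => rfl) F).symm, hFsw, hFal]
    · rw [show (fun p : ℝ × ℝ => (p.2, -p.1)) '' F = be '' (sw '' F) from
        (IC be sw _ (fun p => rfl) F).symm, hFsw, hFbe]
    · rw [show (fun p : ℝ × ℝ => (-p.2, -p.1)) '' F = nu '' (sw '' F) from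
        (IC nu sw _ (fun p => rfl) F).symm, hFsw, hFnu]
  -- compactness
  have hSc : IsCompact S := by
    rw [hS]
    apply IsCompact.of_isClosed_subset (isCompact_Icc (a := ((-m, -m) : ℝ × ℝ)) (b := (m, m)))
    · exact isClosed_le (continuous_fst.abs.add continuous_snd.abs) continuous_const
    · intro p hp
      simp only [Set.mem_setOf_eq] at hp
      have h1 := abs_nonneg p.1
      have h2 := abs_nonneg p.2
      have h3 := le_abs_self p.1
      have h4 := neg_abs_le p.1
      have h5 := le_abs_self p.2
      have h6 := neg_abs_le p.2
      rw [Set.mem_Icc]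
      exact ⟨⟨by simpa using (by linarith : -m ≤ p.1), by simpa using (by linarith : -m ≤ p.2)⟩,
        ⟨by simpa using (by linarith : p.1 ≤ m), by simpa using (by linarith : p.2 ≤ m)⟩⟩
  have hcal : Continuous al := by fun_prop
  have hcbe : Continuous be := by fun_prop
  have hcnu : Continuous nu := by fun_prop
  have hFc : IsCompact F := by
    rw [hFeq]
    exact hSc.union (hWc.union ((hWc.image hcal).union
      ((hWc.image hcbe).union (hWc.image hcnu))))
  have hFm : MeasurableSet F := hFc.isClosed.measurableSet
  -- subset helpers
  have hSF : S ⊆ F := by rw [hFeq]; exact Set.subset_union_left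
  have hWF : W ⊆ F := by rw [hFeq]; intro p hp; exact Or.inr (Or.inl hp)
  have halF : al '' W ⊆ F := by rw [hFeq]; intro p hp; exact Or.inr (Or.inr (Or.inl hp))
  have hnuF : nu '' W ⊆ F := by
    rw [hFeq]; intro p hp; exact Or.inr (Or.inr (Or.inr (Or.inr hp)))
  -- lattice helpers
  have hadd : ∀ a b : ℝ × ℝ, a ∈ rhombicLattice m n → b ∈ rhombicLattice m n →
      a + b ∈ rhombicLattice m n := fun a b ha hb => (Lam m n).add_mem ha hb
  have hneg : ∀ a : ℝ × ℝ, a ∈ rhombicLattice m n → -a ∈ rhombicLattice m n :=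
    fun a ha => (Lam m n).neg_mem ha
  have haG : ∀ w : ℝ × ℝ, w ∈ rhombicLattice m n → ((-w.1, w.2) : ℝ × ℝ) ∈ rhombicLattice m n := by
    rintro w ⟨i, j, rfl⟩
    exact ⟨-i - j, j, by push_cast [Prod.ext_iff]; constructor <;> ring⟩
  have hbG : ∀ w : ℝ × ℝ, w ∈ rhombicLattice m n → ((w.1, -w.2) : ℝ × ℝ) ∈ rhombicLattice m n := by
    rintro w ⟨i, j, rfl⟩
    exact ⟨i + j, -j, by push_cast [Prod.ext_iff]; constructor <;> ring⟩
  -- the filling lemma for the annulus A ∪ B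
  have hfill : ∀ q : ℝ × ℝ, m ≤ q.1 + q.2 → q.1 + q.2 ≤ n → -m ≤ q.1 - q.2 → q.1 - q.2 ≤ m →
      ∃ w ∈ rhombicLattice m n, ∃ z ∈ F, q = z + w := by
    intro q h1 h2 h3 h4
    rcases le_total (q.1 - q.2) (2 * m - n) with hq | hq
    · have hqB : q ∈ B := by rw [hB]; exact ⟨h1, h2, h3, hq⟩
      rw [← hL1] at hqB
      rcases hqB with hqL | ⟨l0, hl0, rfl⟩
      · exact ⟨0, (Lam m n).zero_mem, q, hWF (Or.inr hqL), by simp⟩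
      · refine ⟨(m, n), ⟨0, 1, by norm_num⟩, (-l0.1, -l0.2), hnuF ⟨l0, Or.inr hl0, rfl⟩, ?_⟩
        show ((m - l0.1, n - l0.2) : ℝ × ℝ) = (-l0.1, -l0.2) + (m, n)
        rw [Prod.mk_add_mk, Prod.mk.injEq]
        constructor <;> ring
    · have hqA : q ∈ A := by rw [hA]; exact ⟨h1, h2, hq, h4⟩
      rw [← hK1] at hqA
      rcases hqA with hqK | ⟨k0, hk0, rfl⟩
      · exact ⟨0, (Lam m n).zero_mem, q, hWF (Or.inl hqK), by simp⟩
      · refine ⟨(2 * m, 0), ⟨1, 0, by norm_num⟩, (-k0.1, k0.2), halF ⟨k0, Or.inl hk0, rfl⟩, ?_⟩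
        show ((2 * m - k0.1, k0.2) : ℝ × ℝ) = (-k0.1, k0.2) + (2 * m, 0)
        rw [Prod.mk_add_mk, Prod.mk.injEq]
        constructor <;> ring
  -- covering
  have hcov : (⋃ v ∈ rhombicLattice m n, (fun p => p + v) '' F) = Set.univ := by
    apply Set.eq_univ_of_forall
    intro p
    rw [Set.mem_iUnion₂]
    obtain ⟨k, j, hkj, hP⟩ := cover_plus hm hmn hn3 p.1 p.2
    obtain ⟨r, hr⟩ := hkj
    have hk2 : k = 2 * r + j := by omega
    have hv0 : ((m * k, n * j) : ℝ × ℝ) ∈ rhombicLattice m n := by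
      refine ⟨r, j, ?_⟩
      rw [Prod.ext_iff]
      constructor
      · show m * (k : ℝ) = 2 * m * r + m * j
        have hkr : (k : ℝ) = 2 * r + j := by exact_mod_cast hk2
        rw [hkr]; ring
      · rfl
    set q : ℝ × ℝ := (p.1 - m * k, p.2 - n * j) with hqdef
    have hq1 : q.1 = p.1 - m * k := rfl
    have hq2 : q.2 = p.2 - n * j := rfl
    have hdone : ∀ z w : ℝ × ℝ, w ∈ rhombicLattice m n → z ∈ F → q = z + w →
        ∃ v, ∃ _ : v ∈ rhombicLattice m n, p ∈ (fun p => p + v) '' F := by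
      intro z w hw hz he
      refine ⟨w + (m * k, n * j), hadd _ _ hw hv0, z, hz, ?_⟩
      have : q = (p.1 - m * k, p.2 - n * j) := hqdef
      rw [this] at he
      rw [Prod.ext_iff] at he ⊢
      simp only [Prod.fst_add, Prod.snd_add] at he ⊢
      constructor <;> [linarith [he.1]; linarith [he.2]]
    have hinS : ∀ z : ℝ × ℝ, -m ≤ z.1 + z.2 → z.1 + z.2 ≤ m → -m ≤ z.1 - z.2 → z.1 - z.2 ≤ m →
        z ∈ S := by
      intro z u1 u2 u3 u4
      rw [hS]
      exact (abs_sum_le_iff z.1 z.2 m).mpr ⟨u1, u2, u3, u4⟩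
    unfold inPlus at hP
    rcases hP with ⟨hXn, hYm⟩ | ⟨hXm, hYn⟩
    · rw [abs_le] at hXn hYm
      rcases le_total (q.1 + q.2) m with hXm' | hXm'
      · rcases le_total (-m) (q.1 + q.2) with hXm'' | hXm''
        · exact hdone q 0 ((Lam m n).zero_mem) (hSF (hinS q hXm'' hXm' hYm.1 hYm.2)) (by simp)
        · -- q.1 + q.2 ≤ -m : reflect through nu
          obtain ⟨w, hw, z, hz, he⟩ := hfill (-q.1, -q.2) (by simp; linarith [hq1, hq2])
            (by simp; linarith [hq1, hq2]) (by simp; linarith [hq1, hq2])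
            (by simp; linarith [hq1, hq2])
          refine hdone (-z.1, -z.2) (-w) (hneg w hw) ?_ ?_
          · have : ((-z.1, -z.2) : ℝ × ℝ) = nu z := rfl
            rw [this, ← hFnu]
            exact ⟨z, hz, rfl⟩
          · rw [Prod.ext_iff] at he ⊢
            simp only [Prod.fst_add, Prod.snd_add, Prod.fst_neg, Prod.snd_neg] at he ⊢
            constructor <;> [linarith [he.1]; linarith [he.2]]
      · obtain ⟨w, hw, z, hz, he⟩ := hfill q hXm' hXn.2 hYm.1 hYm.2
        exact hdone z w hw hz he
    · rw [abs_le] at hXm hYn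
      rcases le_total (q.1 - q.2) m with hY1 | hY1
      · rcases le_total (-m) (q.1 - q.2) with hY2 | hY2
        · exact hdone q 0 ((Lam m n).zero_mem) (hSF (hinS q hXm.1 hXm.2 hY2 hY1)) (by simp)
        · -- q.1 - q.2 ≤ -m : reflect through al
          obtain ⟨w, hw, z, hz, he⟩ := hfill (-q.1, q.2) (by simp; linarith [hq1, hq2])
            (by simp; linarith [hq1, hq2]) (by simp; linarith [hq1, hq2])
            (by simp; linarith [hq1, hq2])
          refine hdone (-z.1, z.2) (-w.1, w.2) (haG w hw) ?_ ?_
          · have : ((-z.1, z.2) : ℝ × ℝ) = al z := rfl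
            rw [this, ← hFal]
            exact ⟨z, hz, rfl⟩
          · rw [Prod.ext_iff] at he ⊢
            simp only [Prod.fst_add, Prod.snd_add] at he ⊢
            constructor <;> [linarith [he.1]; linarith [he.2]]
      · -- m ≤ q.1 - q.2 : reflect through be
        obtain ⟨w, hw, z, hz, he⟩ := hfill (q.1, -q.2) (by simp; linarith [hq1, hq2])
          (by simp; linarith [hq1, hq2]) (by simp; linarith [hq1, hq2])
          (by simp; linarith [hq1, hq2])
        refine hdone (z.1, -z.2) (w.1, -w.2) (hbG w hw) ?_ ?_
        · have : ((z.1, -z.2) : ℝ × ℝ) = be z := rfl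
          rw [this, ← hFbe]
          exact ⟨z, hz, rfl⟩
        · rw [Prod.ext_iff] at he ⊢
          simp only [Prod.fst_add, Prod.snd_add] at he ⊢
          constructor <;> [linarith [he.1]; linarith [he.2]]
  -- volume computations
  have hvolS : volume S = ENNReal.ofReal (2 * m * m) := by
    have hST : S = Tmap ⁻¹' (Set.Icc (-m) m ×ˢ Set.Icc (-m) m) := by
      rw [hS]
      ext p
      simp only [Set.mem_setOf_eq, Set.mem_preimage, Set.mem_prod, Set.mem_Icc, Tmap,
        LinearMap.coe_mk, AddHom.coe_mk]
      rw [abs_sum_le_iff]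
      tauto
    rw [hST, vol_T_preimage, vol_box, ← ENNReal.ofReal_mul (by linarith),
      ← ENNReal.ofReal_mul (by norm_num)]
    congr 1
    ring
  have hvolA : volume A = ENNReal.ofReal ((n - m) * (n - m) / 2) := by
    have hAT : A = Tmap ⁻¹' (Set.Icc m n ×ˢ Set.Icc (2 * m - n) m) := by
      rw [hA]
      ext p
      simp only [Set.mem_setOf_eq, Set.mem_preimage, Set.mem_prod, Set.mem_Icc, Tmap,
        LinearMap.coe_mk, AddHom.coe_mk]
      tauto
    rw [hAT, vol_T_preimage, vol_box, ← ENNReal.ofReal_mul (by linarith),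
      ← ENNReal.ofReal_mul (by norm_num)]
    congr 1
    ring
  have hvolB : volume B = ENNReal.ofReal ((n - m) * (3 * m - n) / 2) := by
    have hBT : B = Tmap ⁻¹' (Set.Icc m n ×ˢ Set.Icc (-m) (2 * m - n)) := by
      rw [hB]
      ext p
      simp only [Set.mem_setOf_eq, Set.mem_preimage, Set.mem_prod, Set.mem_Icc, Tmap,
        LinearMap.coe_mk, AddHom.coe_mk]
      tauto
    rw [hBT, vol_T_preimage, vol_box, ← ENNReal.ofReal_mul (by linarith),
      ← ENNReal.ofReal_mul (by norm_num)]
    congr 1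
    ring
  have hKm : MeasurableSet K := hKc.isClosed.measurableSet
  have hLm : MeasurableSet L := hLc.isClosed.measurableSet
  have hKvol : volume A = volume K + volume K := by
    have hτinv : Function.Involutive (fun p : ℝ × ℝ => (2 * m - p.1, p.2)) := by
      intro p; simp
    have hτK : volume ((fun p : ℝ × ℝ => (2 * m - p.1, p.2)) '' K) = volume K :=
      vol_image_inv (mp_tau (2 * m)) hτinv K hKm.nullMeasurableSet
    have hmi := measure_union_add_inter (μ := volume) K
      (((hKc.image (by fun_prop)).isClosed.measurableSet :
        MeasurableSet ((fun p : ℝ × ℝ => (2 * m - p.1, p.2)) '' K)))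
    rw [hK1, hK0, add_zero, hτK] at hmi
    exact hmi
  have hLvol : volume B = volume L + volume L := by
    have hρinv : Function.Involutive (fun p : ℝ × ℝ => (m - p.1, n - p.2)) := by
      intro p; simp
    have hρL : volume ((fun p : ℝ × ℝ => (m - p.1, n - p.2)) '' L) = volume L :=
      vol_image_inv (mp_rho m n) hρinv L hLm.nullMeasurableSet
    have hmi := measure_union_add_inter (μ := volume) L
      (((hLc.image (by fun_prop)).isClosed.measurableSet :
        MeasurableSet ((fun p : ℝ × ℝ => (m - p.1, n - p.2)) '' L)))
    rw [hL1, hL0, add_zero, hρL] at hmi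
    exact hmi
  have halW : volume (al '' W) = volume W :=
    vol_image_inv mp_negfst (fun p => by simp [hal]) W hWm.nullMeasurableSet
  have hbeW : volume (be '' W) = volume W := by
    have h : MeasurePreserving be volume volume := by
      rw [hbe]
      have hbe' : (fun p : ℝ × ℝ => (p.1, -p.2)) = Prod.map (id : ℝ → ℝ) (fun x : ℝ => -x) := rfl
      rw [hbe', show (volume : Measure (ℝ × ℝ)) = (volume : Measure ℝ).prod volume from rfl]
      exact (MeasurePreserving.id _).prod (Measure.measurePreserving_neg _)
    exact vol_image_inv h (fun p => by simp [hbe]) W hWm.nullMeasurableSet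
  have hnuW : volume (nu '' W) = volume W := by
    have h : MeasurePreserving nu volume volume := by
      rw [hnu]
      have hnu' : (fun p : ℝ × ℝ => (-p.1, -p.2))
          = Prod.map (fun x : ℝ => -x) (fun x : ℝ => -x) := rfl
      rw [hnu', show (volume : Measure (ℝ × ℝ)) = (volume : Measure ℝ).prod volume from rfl]
      exact (Measure.measurePreserving_neg _).prod (Measure.measurePreserving_neg _)
    exact vol_image_inv h (fun p => by simp [hnu]) W hWm.nullMeasurableSet
  have hvolF : volume F ≤ ENNReal.ofReal (2 * m * n) := by
    have hWKL : volume W ≤ volume K + volume L := measure_union_le _ _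
    have step : volume F ≤ volume S + (volume W + (volume (al '' W) +
        (volume (be '' W) + volume (nu '' W)))) := by
      rw [hFeq]
      refine le_trans (measure_union_le _ _) ?_
      gcongr
      refine le_trans (measure_union_le _ _) ?_
      gcongr
      refine le_trans (measure_union_le _ _) ?_
      gcongr
      exact measure_union_le _ _
    rw [halW, hbeW, hnuW] at step
    refine le_trans step ?_
    calc volume S + (volume W + (volume W + (volume W + volume W)))
        ≤ volume S + ((volume K + volume L) + ((volume K + volume L) +
            ((volume K + volume L) + (volume K + volume L)))) := by gcongr
      _ = volume S + ((volume A + volume A) + (volume B + volume B)) := by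
            rw [hKvol, hLvol]; ring
      _ = ENNReal.ofReal (2 * m * m) + ((ENNReal.ofReal ((n - m) * (n - m) / 2) +
            ENNReal.ofReal ((n - m) * (n - m) / 2)) + (ENNReal.ofReal ((n - m) * (3 * m - n) / 2)
            + ENNReal.ofReal ((n - m) * (3 * m - n) / 2))) := by rw [hvolS, hvolA, hvolB]
      _ = ENNReal.ofReal (2 * m * m + ((n - m) * (n - m) + (n - m) * (3 * m - n))) := by
            have hnn2 : (0:ℝ) ≤ (n - m) * (n - m) / 2 :=
              div_nonneg (mul_self_nonneg _) (by norm_num)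
            have hnn3 : (0:ℝ) ≤ (n - m) * (3 * m - n) / 2 :=
              div_nonneg (mul_nonneg (by linarith) (by linarith)) (by norm_num)
            rw [← ENNReal.ofReal_add hnn2 hnn2, ← ENNReal.ofReal_add hnn3 hnn3,
              ← ENNReal.ofReal_add (by linarith) (by linarith),
              ← ENNReal.ofReal_add (by positivity) (by linarith)]
            congr 1
            ring
      _ ≤ ENNReal.ofReal (2 * m * n) := by
            apply ENNReal.ofReal_le_ofReal
            nlinarith
  -- overlap of distinct translates is null
  have hover : ∀ v ∈ rhombicLattice m n, v ≠ 0 →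
      volume (F ∩ (fun p => p + v) '' F) = 0 := by
    intro v hv hv0
    have fd := isAddFD m n hm hn
    set Ag : (Lam m n) → Set (ℝ × ℝ) := fun g => (g +ᵥ F) ∩ Dom m n with hAg
    have hAgm : ∀ g, MeasurableSet (Ag g) := fun g =>
      (hFm.const_vadd _).inter (measurable_Dom m n)
    have htsum : ∑' g : Lam m n, volume (Ag g) = volume F := (fd.measure_eq_tsum F).symm
    have hsub : Dom m n ⊆ ⋃ g, Ag g := by
      intro x hx
      have hx' : x ∈ ⋃ v ∈ rhombicLattice m n, (fun p => p + v) '' F := by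
        rw [hcov]; trivial
      obtain ⟨w, hw, f, hf, hfx⟩ := Set.mem_iUnion₂.mp hx'
      exact Set.mem_iUnion.mpr ⟨⟨w, hw⟩, ⟨f, hf, by rw [← hfx]; exact add_comm w f⟩, hx⟩
    have hUnion : (⋃ g, Ag g) = Dom m n :=
      Set.Subset.antisymm (Set.iUnion_subset fun g => Set.inter_subset_right) hsub
    have hle : ∑' g : Lam m n, volume (Ag g) ≤ volume (⋃ g, Ag g) := by
      rw [hUnion, htsum, vol_Dom m n hm hn]
      exact hvolF
    have hfin : volume (⋃ g, Ag g) ≠ ⊤ := by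
      rw [hUnion, vol_Dom m n hm hn]
      exact ENNReal.ofReal_ne_top
    have hnullpair := aux_pairwise_null volume Ag hAgm hle hfin
    rw [image_add_eq_vadd]
    rw [fd.measure_eq_tsum (F ∩ (v +ᵥ F))]
    rw [ENNReal.tsum_eq_zero]
    intro g
    have hne : g ≠ g + ⟨v, hv⟩ := by
      intro hgg
      apply hv0
      have h0 : (⟨v, hv⟩ : Lam m n) = 0 := (left_eq_add.mp hgg)
      exact congrArg Subtype.val h0
    have hsubset : (g +ᵥ (F ∩ (v +ᵥ F))) ∩ Dom m n ⊆ Ag g ∩ Ag (g + ⟨v, hv⟩) := by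
      rintro x ⟨hx1, hxD⟩
      obtain ⟨y, hy, rfl⟩ := Set.mem_vadd_set.mp hx1
      obtain ⟨hyF, hy2⟩ := hy
      obtain ⟨z, hz, rfl⟩ := Set.mem_vadd_set.mp hy2
      refine ⟨⟨Set.mem_vadd_set.mpr ⟨v +ᵥ z, hyF, rfl⟩, hxD⟩,
        ⟨Set.mem_vadd_set.mpr ⟨z, hz, ?_⟩, hxD⟩⟩
      show ((g : ℝ × ℝ) + v) + z = (g : ℝ × ℝ) + (v + z)
      rw [add_assoc]
    refine le_antisymm (le_trans (measure_mono hsubset) ?_) zero_le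
    rw [hnullpair g (g + ⟨v, hv⟩) hne]
  -- empty interior intersection
  have hint : ∀ v ∈ rhombicLattice m n, v ≠ 0 →
      interior F ∩ interior ((fun p => p + v) '' F) = ∅ := by
    intro v hv hv0
    rcases Set.eq_empty_or_nonempty (interior F ∩ interior ((fun p => p + v) '' F)) with he | hne
    · exact he
    exfalso
    have hopen : IsOpen (interior F ∩ interior ((fun p => p + v) '' F)) :=
      isOpen_interior.inter isOpen_interior
    have hpos := hopen.measure_pos volume hne
    have hmono : interior F ∩ interior ((fun p => p + v) '' F) ⊆ F ∩ (fun p => p + v) '' F :=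
      Set.inter_subset_inter interior_subset interior_subset
    have hmm : volume (interior F ∩ interior ((fun p => p + v) '' F))
        ≤ volume (F ∩ (fun p => p + v) '' F) := measure_mono hmono
    rw [hover v hv hv0] at hmm
    exact hpos.ne' (le_antisymm hmm zero_le)
  exact ⟨hFc, hcov, hint, hoctic⟩
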